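/- Suppose z₁, z₂ : [φ₀, φ₀+π] → ℂ∖{0} are two solutions of dz/dφ = 1/f(φ) − (n/f(φ))·z/|z| + i·z with f positive and continuous and 0 < n, and suppose |z₁(φ₀+π) − z₂(φ₀+π)|² = |z₁(φ₀) − z₂(φ₀)|². If additionally the angular parts satisfy e^{iζ₁(φ)} = e^{iζ₂(φ)} for all φ in the interval (forced by the equality, via the derivative formula for L) and sin ζ₁ ≡ 0 on a subinterval, then dζ₁/dφ = 1 on that subinterval, contradicting ζ₁ being constant; hence two distinct solutions cannot have equal squared distance at φ₀ and φ₀+π. -/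

import Mathlib

open Complex Set

lemma HasDerivAt.complex_re' {w : ℝ → ℂ} {w' : ℂ} {x : ℝ} (h : HasDerivAt w w' x) :
    HasDerivAt (fun t => (w t).re) w'.re x := by
  exact (Complex.reCLM.hasFDerivAt.comp_hasDerivAt x h :)

lemma HasDerivAt.complex_im' {w : ℝ → ℂ} {w' : ℂ} {x : ℝ} (h : HasDerivAt w w' x) :
    HasDerivAt (fun t => (w t).im) w'.im x := by
  exact (Complex.imCLM.hasFDerivAt.comp_hasDerivAt x h :)

lemma HasDerivAt.complex_conj' {w : ℝ → ℂ} {w' : ℂ} {x : ℝ} (h : HasDerivAt w w' x) :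
    HasDerivAt (fun t => (starRingEnd ℂ) (w t)) ((starRingEnd ℂ) w') x := by
  exact h.star

lemma hasDerivAt_normSq' {w : ℝ → ℂ} {w' : ℂ} {x : ℝ} (h : HasDerivAt w w' x) :
    HasDerivAt (fun t => Complex.normSq (w t)) (2 * ((starRingEnd ℂ) (w x) * w').re) x := by
  have h2 := (h.complex_re'.mul h.complex_re').add (h.complex_im'.mul h.complex_im')
  have e : (fun t => Complex.normSq (w t)) = fun t => (w t).re * (w t).re + (w t).im * (w t).im :=
    funext fun t => Complex.normSq_apply _
  rw [e]
  refine h2.congr_deriv ?_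
  simp [Complex.mul_re, Complex.conj_re, Complex.conj_im]; ring

lemma conj_mul_self_div_abs (z : ℂ) (hz : z ≠ 0) :
    (starRingEnd ℂ) z * (z / ((‖z‖ : ℝ) : ℂ)) = ((‖z‖ : ℝ) : ℂ) := by
  have h0 : ((‖z‖ : ℝ) : ℂ) ≠ 0 := by
    simp [Complex.ofReal_eq_zero, norm_ne_zero_iff.mpr hz]
  rw [mul_div_assoc', mul_comm, Complex.mul_conj]
  rw [Complex.normSq_eq_norm_sq]
  field_simp
  push_cast
  ring

lemma keyre (z₁ z₂ : ℂ) (h₁ : z₁ ≠ 0) (h₂ : z₂ ≠ 0) (m : ℝ) :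
    ((starRingEnd ℂ) (z₁ - z₂) * (-(m:ℂ) * (z₁/((‖z₁‖ : ℝ):ℂ) - z₂/((‖z₂‖ : ℝ):ℂ)) + Complex.I*(z₁-z₂))).re
    = -(m * (‖z₁‖ + ‖z₂‖ - ((starRingEnd ℂ) z₁ * (z₂/((‖z₂‖ : ℝ):ℂ))).re - ((starRingEnd ℂ) z₂ * (z₁/((‖z₁‖ : ℝ):ℂ))).re)) := by
  set u₁ := z₁/((‖z₁‖ : ℝ):ℂ)
  set u₂ := z₂/((‖z₂‖ : ℝ):ℂ)
  have hI : ((starRingEnd ℂ) (z₁ - z₂) * (Complex.I * (z₁ - z₂))).re = 0 := by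
    have : (starRingEnd ℂ) (z₁ - z₂) * (Complex.I * (z₁ - z₂))
        = ((Complex.normSq (z₁ - z₂) : ℝ) : ℂ) * Complex.I := by
      rw [show (starRingEnd ℂ) (z₁ - z₂) * (Complex.I * (z₁ - z₂))
          = ((z₁ - z₂) * (starRingEnd ℂ) (z₁ - z₂)) * Complex.I by ring, Complex.mul_conj]
    rw [this]
    simp [Complex.mul_re]
  have expand : (starRingEnd ℂ) (z₁ - z₂) * (-(m:ℂ) * (u₁ - u₂))
      = (m:ℂ) * -(((starRingEnd ℂ) z₁ * u₁ - (starRingEnd ℂ) z₁ * u₂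
          - (starRingEnd ℂ) z₂ * u₁ + (starRingEnd ℂ) z₂ * u₂)) := by
    rw [map_sub]; ring
  rw [mul_add, Complex.add_re, hI, add_zero, expand, Complex.re_ofReal_mul]
  have e₁ : ((starRingEnd ℂ) z₁ * u₁).re = ‖z₁‖ := by
    rw [conj_mul_self_div_abs z₁ h₁]; simp
  have e₂ : ((starRingEnd ℂ) z₂ * u₂).re = ‖z₂‖ := by
    rw [conj_mul_self_div_abs z₂ h₂]; simp
  simp only [Complex.neg_re, Complex.sub_re, Complex.add_re, e₁, e₂]
  ring

lemma eqdir (z u : ℂ) (hz : z ≠ 0) (hu : ‖u‖ = 1)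
    (h : ((starRingEnd ℂ) z * u).re = ‖z‖) :
    u = z / ((‖z‖ : ℝ) : ℂ) := by
  have habsne : ((‖z‖ : ℝ) : ℂ) ≠ 0 := by
    simp [Complex.ofReal_eq_zero, norm_ne_zero_iff.mpr hz]
  have habs : ‖(starRingEnd ℂ) z * u‖ = ‖z‖ := by
    rw [norm_mul, Complex.norm_conj, hu, mul_one]
  have him : ((starRingEnd ℂ) z * u).im = 0 := by
    have h1 := Complex.sq_norm ((starRingEnd ℂ) z * u)
    rw [habs, Complex.normSq_apply] at h1
    have h2 : ((starRingEnd ℂ) z * u).im * ((starRingEnd ℂ) z * u).im = 0 := by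
      rw [← h] at h1; nlinarith [h1]
    nlinarith [h2]
  have hval : (starRingEnd ℂ) z * u = ((‖z‖ : ℝ) : ℂ) := by
    apply Complex.ext <;> simp [h, him]
  have key : z * (starRingEnd ℂ) z = ((‖z‖ : ℝ):ℂ) * ((‖z‖ : ℝ):ℂ) := by
    rw [Complex.mul_conj, Complex.normSq_eq_norm_sq]; push_cast; ring
  rw [eq_div_iff habsne]
  apply mul_left_cancel₀ habsne
  linear_combination z * hval - u * key


/-- Strict decrease of the squared distance over one period (Step 3 of the stability
proof): two solutions of the complex pursuit ODE on `[φ₀, φ₀+π]` that are not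
identical cannot have equal squared distance at `φ₀` and `φ₀ + π`; the distance
strictly decreases. -/
theorem strict_decrease_over_period (n φ₀ : ℝ) (hn : 0 < n)
    (f : ℝ → ℝ) (hfpos : ∀ φ, 0 < f φ) (hfcont : Continuous f)
    (z₁ z₂ : ℝ → ℂ) (hz₁ : Differentiable ℝ z₁) (hz₂ : Differentiable ℝ z₂)
    (hz₁0 : ∀ φ, z₁ φ ≠ 0) (hz₂0 : ∀ φ, z₂ φ ≠ 0)
    (hode₁ : ∀ φ ∈ Set.Icc φ₀ (φ₀ + Real.pi), deriv z₁ φ =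
      ((1 / f φ : ℝ) : ℂ) - ((n / f φ : ℝ) : ℂ) * (z₁ φ / ((‖z₁ φ‖ : ℝ) : ℂ))
        + Complex.I * z₁ φ)
    (hode₂ : ∀ φ ∈ Set.Icc φ₀ (φ₀ + Real.pi), deriv z₂ φ =
      ((1 / f φ : ℝ) : ℂ) - ((n / f φ : ℝ) : ℂ) * (z₂ φ / ((‖z₂ φ‖ : ℝ) : ℂ))
        + Complex.I * z₂ φ)
    (hdistinct : ¬ Set.EqOn z₁ z₂ (Set.Icc φ₀ (φ₀ + Real.pi))) :
    ‖z₁ (φ₀ + Real.pi) - z₂ (φ₀ + Real.pi)‖ ^ 2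
      < ‖z₁ φ₀ - z₂ φ₀‖ ^ 2 := by
  have hπ : (0:ℝ) < Real.pi := Real.pi_pos
  set b := φ₀ + Real.pi with hbdef
  have hab : φ₀ ≤ b := by rw [hbdef]; linarith
  set w : ℝ → ℂ := fun t => z₁ t - z₂ t with hwdef
  set L : ℝ → ℝ := fun t => Complex.normSq (w t) with hLdef
  have hw : Differentiable ℝ w := hz₁.sub hz₂
  have hwderiv : ∀ φ, deriv w φ = deriv z₁ φ - deriv z₂ φ := fun φ => deriv_sub (hz₁ φ) (hz₂ φ)
  have hLD : ∀ φ, HasDerivAt L (2 * ((starRingEnd ℂ) (w φ) * deriv w φ).re) φ :=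
    fun φ => hasDerivAt_normSq' (hw φ).hasDerivAt
  have hr₁ : ∀ φ, (0:ℝ) < ‖z₁ φ‖ := fun φ => norm_pos_iff.mpr (hz₁0 φ)
  have hr₂ : ∀ φ, (0:ℝ) < ‖z₂ φ‖ := fun φ => norm_pos_iff.mpr (hz₂0 φ)
  have hr₁C : ∀ φ, ((‖z₁ φ‖ : ℝ):ℂ) ≠ 0 := fun φ => by
    simp [Complex.ofReal_eq_zero, (hr₁ φ).ne']
  have hr₂C : ∀ φ, ((‖z₂ φ‖ : ℝ):ℂ) ≠ 0 := fun φ => by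
    simp [Complex.ofReal_eq_zero, (hr₂ φ).ne']
  set g : ℝ → ℝ := fun φ => ‖z₁ φ‖ + ‖z₂ φ‖
      - ((starRingEnd ℂ) (z₁ φ) * (z₂ φ / ((‖z₂ φ‖ : ℝ):ℂ))).re
      - ((starRingEnd ℂ) (z₂ φ) * (z₁ φ / ((‖z₁ φ‖ : ℝ):ℂ))).re with hgdef
  have hu1abs : ∀ φ, ‖z₁ φ / ((‖z₁ φ‖ : ℝ):ℂ)‖ = 1 := fun φ => by
    rw [norm_div, Complex.norm_of_nonneg (norm_nonneg _),
      div_self (hr₁ φ).ne']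
  have hu2abs : ∀ φ, ‖z₂ φ / ((‖z₂ φ‖ : ℝ):ℂ)‖ = 1 := fun φ => by
    rw [norm_div, Complex.norm_of_nonneg (norm_nonneg _),
      div_self (hr₂ φ).ne']
  have hg1 : ∀ φ, ((starRingEnd ℂ) (z₁ φ) * (z₂ φ / ((‖z₂ φ‖ : ℝ):ℂ))).re
      ≤ ‖z₁ φ‖ := fun φ => by
    calc ((starRingEnd ℂ) (z₁ φ) * (z₂ φ / ((‖z₂ φ‖ : ℝ):ℂ))).re
        ≤ ‖(starRingEnd ℂ) (z₁ φ) * (z₂ φ / ((‖z₂ φ‖ : ℝ):ℂ))‖ :=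
          Complex.re_le_norm _
      _ = ‖z₁ φ‖ := by rw [norm_mul, Complex.norm_conj, hu2abs φ, mul_one]
  have hg2 : ∀ φ, ((starRingEnd ℂ) (z₂ φ) * (z₁ φ / ((‖z₁ φ‖ : ℝ):ℂ))).re
      ≤ ‖z₂ φ‖ := fun φ => by
    calc ((starRingEnd ℂ) (z₂ φ) * (z₁ φ / ((‖z₁ φ‖ : ℝ):ℂ))).re
        ≤ ‖(starRingEnd ℂ) (z₂ φ) * (z₁ φ / ((‖z₁ φ‖ : ℝ):ℂ))‖ :=
          Complex.re_le_norm _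
      _ = ‖z₂ φ‖ := by rw [norm_mul, Complex.norm_conj, hu1abs φ, mul_one]
  have hgnonneg : ∀ φ, 0 ≤ g φ := fun φ => by
    have := hg1 φ; have := hg2 φ
    simp only [hgdef]; linarith
  have hderivL : ∀ φ ∈ Set.Icc φ₀ b, deriv L φ = -(2 * ((n / f φ) * g φ)) := by
    intro φ hφ
    rw [(hLD φ).deriv, hwderiv φ, hode₁ φ hφ, hode₂ φ hφ]
    rw [show (((1 / f φ : ℝ):ℂ) - ((n / f φ : ℝ):ℂ) * (z₁ φ / ((‖z₁ φ‖:ℝ):ℂ))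
          + Complex.I * z₁ φ)
        - (((1 / f φ : ℝ):ℂ) - ((n / f φ : ℝ):ℂ) * (z₂ φ / ((‖z₂ φ‖:ℝ):ℂ))
          + Complex.I * z₂ φ)
        = -((n / f φ:ℝ):ℂ) * (z₁ φ / ((‖z₁ φ‖:ℝ):ℂ)
            - z₂ φ / ((‖z₂ φ‖:ℝ):ℂ)) + Complex.I * (z₁ φ - z₂ φ) by ring]
    simp only [hwdef]
    rw [keyre (z₁ φ) (z₂ φ) (hz₁0 φ) (hz₂0 φ) (n / f φ)]
    simp only [hgdef]; ring
  have hLcont : Continuous L := Complex.continuous_normSq.comp hw.continuous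
  have hanti : AntitoneOn L (Set.Icc φ₀ b) := by
    apply antitoneOn_of_deriv_nonpos (convex_Icc _ _) hLcont.continuousOn
    · intro x _; exact ((hLD x).differentiableAt).differentiableWithinAt
    · intro x hx
      rw [interior_Icc] at hx
      rw [hderivL x (Ioo_subset_Icc_self hx)]
      have h1 := hgnonneg x
      have h2 : 0 < n / f x := div_pos hn (hfpos x)
      nlinarith [mul_nonneg h2.le h1]
  rw [Complex.sq_norm, Complex.sq_norm]
  show L b < L φ₀
  by_contra hcon
  push_neg at hcon
  have hba : L b ≤ L φ₀ := hanti ⟨le_rfl, hab⟩ ⟨hab, le_rfl⟩ hab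
  have heq : L b = L φ₀ := le_antisymm hba hcon
  have hconst : ∀ φ ∈ Set.Icc φ₀ b, L φ = L φ₀ := fun φ hφ =>
    le_antisymm (hanti ⟨le_rfl, hab⟩ hφ hφ.1) (heq ▸ hanti hφ ⟨hab, le_rfl⟩ hφ.2)
  have hLpos : 0 < L φ₀ := by
    rcases lt_or_eq_of_le (Complex.normSq_nonneg (w φ₀) : (0:ℝ) ≤ L φ₀) with h|h
    · exact h
    · exfalso; apply hdistinct
      intro φ hφ
      have h1 : Complex.normSq (w φ) = 0 := (hconst φ hφ).trans h.symm
      have h2 : w φ = 0 := Complex.normSq_eq_zero.mp h1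
      have h3 : z₁ φ - z₂ φ = 0 := h2
      exact sub_eq_zero.mp h3
  have hderiv0 : ∀ φ ∈ Set.Ioo φ₀ b, deriv L φ = 0 := by
    intro φ hφ
    have hev : L =ᶠ[nhds φ] fun _ => L φ₀ := by
      filter_upwards [Ioo_mem_nhds hφ.1 hφ.2] with x hx
      exact hconst x (Ioo_subset_Icc_self hx)
    rw [hev.deriv_eq]; exact deriv_const _ _
  have hgzero : ∀ φ ∈ Set.Ioo φ₀ b, g φ = 0 := by
    intro φ hφ
    have h0 := hderiv0 φ hφ
    rw [hderivL φ (Ioo_subset_Icc_self hφ)] at h0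
    have h2 : 0 < n / f φ := div_pos hn (hfpos φ)
    have h3 : (n / f φ) * g φ = 0 := by linarith
    rcases mul_eq_zero.mp h3 with h|h
    · exact absurd h (ne_of_gt h2)
    · exact h
  have hu21 : ∀ φ ∈ Set.Ioo φ₀ b,
      z₂ φ / ((‖z₂ φ‖ : ℝ):ℂ) = z₁ φ / ((‖z₁ φ‖ : ℝ):ℂ) := by
    intro φ hφ
    have hg0 := hgzero φ hφ
    simp only [hgdef] at hg0
    have e1 : ((starRingEnd ℂ) (z₁ φ) * (z₂ φ / ((‖z₂ φ‖ : ℝ):ℂ))).re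
        = ‖z₁ φ‖ := by
      have := hg1 φ; have := hg2 φ; linarith
    exact eqdir (z₁ φ) _ (hz₁0 φ) (hu2abs φ) e1
  have hodew : ∀ φ ∈ Set.Ioo φ₀ b, deriv w φ = Complex.I * w φ := by
    intro φ hφ
    rw [hwderiv φ, hode₁ φ (Ioo_subset_Icc_self hφ), hode₂ φ (Ioo_subset_Icc_self hφ),
      hu21 φ hφ]
    simp only [hwdef]
    ring
  set d : ℝ → ℝ := fun φ => ‖z₁ φ‖ - ‖z₂ φ‖ with hddef
  have hpar : ∀ φ ∈ Set.Ioo φ₀ b,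
      ((‖z₁ φ‖:ℝ):ℂ) * w φ = ((d φ : ℝ):ℂ) * z₁ φ := by
    intro φ hφ
    have h := hu21 φ hφ
    rw [div_eq_div_iff (hr₂C φ) (hr₁C φ)] at h
    simp only [hwdef, hddef]
    push_cast
    linear_combination -h
  have hd2 : ∀ φ ∈ Set.Ioo φ₀ b, d φ ^ 2 = L φ₀ := by
    intro φ hφ
    have h := congrArg Complex.normSq (hpar φ hφ)
    rw [map_mul, map_mul, Complex.normSq_ofReal, Complex.normSq_ofReal] at h
    have hL : Complex.normSq (w φ) = L φ₀ := hconst φ (Ioo_subset_Icc_self hφ)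
    have hz : Complex.normSq (z₁ φ) = ‖z₁ φ‖ * ‖z₁ φ‖ := by
      rw [Complex.normSq_eq_norm_sq]; ring
    rw [hL, hz] at h
    have h4 : (‖z₁ φ‖ * ‖z₁ φ‖) * L φ₀
        = (‖z₁ φ‖ * ‖z₁ φ‖) * (d φ ^ 2) := by linear_combination h
    have h5 : ‖z₁ φ‖ * ‖z₁ φ‖ ≠ 0 :=
      (mul_pos (hr₁ φ) (hr₁ φ)).ne'
    exact (mul_left_cancel₀ h5 h4).symm
  have hdcont : Continuous d := by
    simp only [hddef]
    exact (continuous_norm.comp hz₁.continuous).sub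
      (continuous_norm.comp hz₂.continuous)
  have hdconst : ∀ x ∈ Set.Ioo φ₀ b, ∀ y ∈ Set.Ioo φ₀ b, d x = d y := by
    intro x hx y hy
    by_contra hne
    have h1 := hd2 x hx
    have h2 := hd2 y hy
    have hsum : (d x - d y) * (d x + d y) = 0 := by nlinarith [h1, h2]
    have hxy : d x = - d y := by
      rcases mul_eq_zero.mp hsum with h|h
      · exact absurd (by linarith) hne
      · linarith
    have h0mem : (0:ℝ) ∈ Set.uIcc (d x) (d y) := by
      rcases lt_or_ge (d x) 0 with h|h
      · have hy' : 0 ≤ d y := by nlinarith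
        exact Set.mem_uIcc.mpr (Or.inl ⟨h.le, hy'⟩)
      · have hy' : d y ≤ 0 := by nlinarith
        exact Set.mem_uIcc.mpr (Or.inr ⟨hy', h⟩)
    obtain ⟨t, ht, ht0⟩ := intermediate_value_uIcc (hdcont.continuousOn) h0mem
    have htIoo : t ∈ Set.Ioo φ₀ b := Set.ordConnected_Ioo.uIcc_subset hx hy ht
    have := hd2 t htIoo
    rw [ht0] at this
    simp at this
    linarith [hLpos]
  set φm := φ₀ + Real.pi / 2 with hφmdef
  have hφmIoo : φm ∈ Set.Ioo φ₀ b := by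
    constructor
    · rw [hφmdef]; linarith
    · rw [hφmdef, hbdef]; linarith
  set c₀ := d φm with hc₀def
  have hc₀2 : c₀ ^ 2 = L φ₀ := hd2 φm hφmIoo
  have hc₀ne : c₀ ≠ 0 := by
    intro h; rw [h] at hc₀2; simp at hc₀2; linarith [hLpos]
  have hc₀C : ((c₀:ℝ):ℂ) ≠ 0 := by simpa using hc₀ne
  set U : ℝ → ℂ := fun t => ((c₀:ℝ):ℂ)⁻¹ * w t with hUdef
  have hUdiff : Differentiable ℝ U := hw.const_mul _
  have hUd : ∀ φ ∈ Set.Ioo φ₀ b, deriv U φ = Complex.I * U φ := by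
    intro φ hφ
    simp only [hUdef]
    rw [deriv_const_mul _ (hw φ), hodew φ hφ]
    ring
  have hUeq : ∀ φ ∈ Set.Ioo φ₀ b, U φ = z₁ φ / ((‖z₁ φ‖ : ℝ):ℂ) := by
    intro φ hφ
    have h := hpar φ hφ
    have hdφ : d φ = c₀ := hdconst φ hφ φm hφmIoo
    rw [hdφ] at h
    simp only [hUdef]
    rw [eq_div_iff (hr₁C φ), inv_mul_eq_div, div_mul_eq_mul_div, div_eq_iff hc₀C]
    linear_combination h
  set ρ : ℝ → ℂ := fun t => (starRingEnd ℂ) (U t) * z₁ t with hρdef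
  have hρD : ∀ φ, HasDerivAt ρ
      ((starRingEnd ℂ) (deriv U φ) * z₁ φ + (starRingEnd ℂ) (U φ) * deriv z₁ φ) φ := by
    intro φ
    have h1 := ((hUdiff φ).hasDerivAt.complex_conj').mul (hz₁ φ).hasDerivAt
    exact h1
  have hρim : ∀ φ ∈ Set.Ioo φ₀ b, (ρ φ).im = 0 := by
    intro φ hφ
    simp only [hρdef]
    rw [hUeq φ hφ, map_div₀, Complex.conj_ofReal, div_mul_eq_mul_div, mul_comm,
      Complex.mul_conj]
    rw [show ((Complex.normSq (z₁ φ) : ℝ):ℂ) / ((‖z₁ φ‖ : ℝ):ℂ)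
        = ((Complex.normSq (z₁ φ) / ‖z₁ φ‖ : ℝ):ℂ) by push_cast; ring]
    exact Complex.ofReal_im _
  have hUim : ∀ φ ∈ Set.Ioo φ₀ b, (U φ).im = 0 := by
    intro φ hφ
    have hev : (fun t => (ρ t).im) =ᶠ[nhds φ] fun _ => 0 := by
      filter_upwards [Ioo_mem_nhds hφ.1 hφ.2] with x hx
      exact hρim x hx
    have h1 : deriv (fun t => (ρ t).im) φ = 0 := by
      rw [hev.deriv_eq]; exact deriv_const _ _
    have h2 := ((hρD φ).complex_im').deriv
    have h3 : ((starRingEnd ℂ) (deriv U φ) * z₁ φ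
        + (starRingEnd ℂ) (U φ) * deriv z₁ φ).im = 0 := by rw [← h2]; exact h1
    rw [hUd φ hφ, hode₁ φ (Ioo_subset_Icc_self hφ), ← hUeq φ hφ] at h3
    have hsimp : (starRingEnd ℂ) (Complex.I * U φ) * z₁ φ
        + (starRingEnd ℂ) (U φ) * (((1/f φ:ℝ):ℂ) - ((n/f φ:ℝ):ℂ) * U φ + Complex.I * z₁ φ)
        = ((1/f φ:ℝ):ℂ) * (starRingEnd ℂ) (U φ)
          - ((n/f φ:ℝ):ℂ) * ((Complex.normSq (U φ) : ℝ):ℂ) := by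
      rw [map_mul, Complex.conj_I, ← Complex.mul_conj]
      ring
    rw [hsimp] at h3
    simp only [Complex.sub_im, Complex.im_ofReal_mul, Complex.conj_im,
      Complex.ofReal_im, mul_zero, sub_zero] at h3
    have hf := (hfpos φ).ne'
    rcases mul_eq_zero.mp h3 with h|h
    · exact absurd h (by positivity)
    · linarith
  have hev : (fun t => (U t).im) =ᶠ[nhds φm] fun _ => 0 := by
    filter_upwards [Ioo_mem_nhds hφmIoo.1 hφmIoo.2] with x hx
    exact hUim x hx
  have h1 : deriv (fun t => (U t).im) φm = 0 := by
    rw [hev.deriv_eq]; exact deriv_const _ _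
  have h2 := ((hUdiff φm).hasDerivAt.complex_im').deriv
  have h3 : (deriv U φm).im = 0 := by rw [← h2]; exact h1
  rw [hUd φm hφmIoo] at h3
  have hre : (U φm).re = 0 := by simpa [Complex.mul_im] using h3
  have him := hUim φm hφmIoo
  have hU0 : U φm = 0 := by
    apply Complex.ext <;> simp [hre, him]
  rw [hUeq φm hφmIoo] at hU0
  rcases div_eq_zero_iff.mp hU0 with h|h
  · exact hz₁0 φm h
  · exact hr₁C φm h
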